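/- Let η ≥ 0, assume the uncertainty set U_η is nonempty, and let S ∈ 𝒮. Then inf_{λ ∈ U_η} R^λ(S) equals the infimum of Σ_{(i_1,…,i_M) ∈ L} ρ_{i_1⋯i_M}(S)·μ(i_1,…,i_M) over all functions μ : L → ℝ satisfying: μ(t) ≥ 0 for all t ∈ L; Σ_{t ∈ L} μ(t) = 1; and |Σ_{t ∈ L : t_m = i} μ(t) − v_{m,i}| ≤ η for every m ∈ {1,…,M} and every i ∈ S_m. -/
import Mathlib


namespace RobustAssortment

/-- `i` is the most preferred product of the assortment `S` under the ranking `σ`. -/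
def isTop {n : ℕ} (σ : Equiv.Perm (Fin (n + 1))) (S : Finset (Fin (n + 1)))
    (i : Fin (n + 1)) : Prop :=
  i ∈ S ∧ ∀ j ∈ S, σ i ≤ σ j

instance {n : ℕ} (σ : Equiv.Perm (Fin (n + 1))) (S : Finset (Fin (n + 1)))
    (i : Fin (n + 1)) : Decidable (isTop σ S i) := by
  unfold isTop; infer_instance
/-- A ranking-based choice model: nonnegative weights on rankings summing to one. -/
def IsChoiceModel {n : ℕ} (lam : Equiv.Perm (Fin (n + 1)) → ℝ) : Prop :=
  (∀ σ, 0 ≤ lam σ) ∧ ∑ σ : Equiv.Perm (Fin (n + 1)), lam σ = 1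

/-- Choice probability `D^λ_i(S)`. -/
noncomputable def choiceProb {n : ℕ} (lam : Equiv.Perm (Fin (n + 1)) → ℝ)
    (S : Finset (Fin (n + 1))) (i : Fin (n + 1)) : ℝ :=
  ∑ σ : Equiv.Perm (Fin (n + 1)), if isTop σ S i then lam σ else 0

/-- Expected revenue `R^λ(S)`. -/
noncomputable def expRev {n : ℕ} (r : Fin (n + 1) → ℝ)
    (lam : Equiv.Perm (Fin (n + 1)) → ℝ) (S : Finset (Fin (n + 1))) : ℝ :=
  ∑ i ∈ S, r i * choiceProb lam S i

/-- The uncertainty set `U_η` of choice models consistent with the sales data. -/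
def Uset {n M : ℕ} (Sm : Fin M → Finset (Fin (n + 1)))
    (v : Fin M → Fin (n + 1) → ℝ) (η : ℝ) :
    Set (Equiv.Perm (Fin (n + 1)) → ℝ) :=
  {lam | IsChoiceModel lam ∧
    ∀ m : Fin M, ∀ i ∈ Sm m, |choiceProb lam (Sm m) i - v m i| ≤ η}

/-- Worst-case expected revenue `inf_{λ ∈ U_η} R^λ(S)`. -/
noncomputable def wcRev {n M : ℕ} (Sm : Fin M → Finset (Fin (n + 1)))
    (v : Fin M → Fin (n + 1) → ℝ) (η : ℝ) (r : Fin (n + 1) → ℝ)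
    (S : Finset (Fin (n + 1))) : ℝ :=
  sInf {x | ∃ lam ∈ Uset Sm v η, x = expRev r lam S}
/-- Membership in the set `L` of tuples of products compatible with a common ranking. -/
def memL {n M : ℕ} (Sm : Fin M → Finset (Fin (n + 1)))
    (t : Fin M → Fin (n + 1)) : Prop :=
  ∃ σ : Equiv.Perm (Fin (n + 1)), ∀ m : Fin M, isTop σ (Sm m) (t m)

instance {n M : ℕ} (Sm : Fin M → Finset (Fin (n + 1))) (t : Fin M → Fin (n + 1)) :
    Decidable (memL Sm t) := by
  unfold memL; infer_instance
/-- The quantity `ρ_{i_1⋯i_M}(S)`: the minimum revenue among products of `S` that can be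
the top of `S` under a ranking corresponding to the tuple `t`. -/
noncomputable def rho {n M : ℕ} (Sm : Fin M → Finset (Fin (n + 1)))
    (r : Fin (n + 1) → ℝ) (t : Fin M → Fin (n + 1)) (S : Finset (Fin (n + 1))) : ℝ :=
  sInf {x | ∃ i ∈ S, (∃ σ : Equiv.Perm (Fin (n + 1)),
    (∀ m : Fin M, isTop σ (Sm m) (t m)) ∧ isTop σ S i) ∧ x = r i}

/- ### auxiliary lemmas -/

lemma isTop_unique {n : ℕ} {σ : Equiv.Perm (Fin (n + 1))} {S : Finset (Fin (n + 1))}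
    {i j : Fin (n + 1)} (hi : isTop σ S i) (hj : isTop σ S j) : i = j :=
  σ.injective (le_antisymm (hi.2 j hj.1) (hj.2 i hi.1))

lemma exists_top {n : ℕ} (σ : Equiv.Perm (Fin (n + 1))) {S : Finset (Fin (n + 1))}
    (hS : S.Nonempty) : ∃ i, isTop σ S i := by
  obtain ⟨b, hb, hmin⟩ := S.exists_min_image σ hS
  exact ⟨b, hb, hmin⟩

noncomputable def topOf {n : ℕ} (σ : Equiv.Perm (Fin (n + 1))) (S : Finset (Fin (n + 1))) :
    Fin (n + 1) :=
  if h : S.Nonempty then Classical.choose (exists_top σ h) else 0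

lemma topOf_spec {n : ℕ} (σ : Equiv.Perm (Fin (n + 1))) {S : Finset (Fin (n + 1))}
    (hS : S.Nonempty) : isTop σ S (topOf σ S) := by
  rw [topOf, dif_pos hS]; exact Classical.choose_spec (exists_top σ hS)

lemma isTop_iff {n : ℕ} (σ : Equiv.Perm (Fin (n + 1))) {S : Finset (Fin (n + 1))}
    (hS : S.Nonempty) (i : Fin (n + 1)) : isTop σ S i ↔ topOf σ S = i :=
  ⟨fun h => isTop_unique (topOf_spec σ hS) h, fun h => h ▸ topOf_spec σ hS⟩

lemma expRev_eq {n : ℕ} (r : Fin (n + 1) → ℝ) (lam : Equiv.Perm (Fin (n + 1)) → ℝ)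
    {S : Finset (Fin (n + 1))} (hS : S.Nonempty) :
    expRev r lam S = ∑ σ : Equiv.Perm (Fin (n + 1)), r (topOf σ S) * lam σ := by
  unfold expRev choiceProb
  simp_rw [Finset.mul_sum]
  rw [Finset.sum_comm]
  refine Finset.sum_congr rfl fun σ _ => ?_
  rw [Finset.sum_eq_single_of_mem (topOf σ S) (topOf_spec σ hS).1]
  · rw [if_pos (topOf_spec σ hS)]
  · intro j hj hne
    rw [if_neg fun h => hne (isTop_unique h (topOf_spec σ hS)), mul_zero]

lemma choiceProb_eq {n : ℕ} (lam : Equiv.Perm (Fin (n + 1)) → ℝ)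
    {S : Finset (Fin (n + 1))} (hS : S.Nonempty) (i : Fin (n + 1)) :
    choiceProb lam S i = ∑ σ : Equiv.Perm (Fin (n + 1)), if topOf σ S = i then lam σ else 0 := by
  unfold choiceProb
  exact Finset.sum_congr rfl fun σ _ => if_congr (isTop_iff σ hS i) rfl rfl

/-- Proposition 1 of the paper: the worst-case expected revenue of a fixed assortment is the
value of a finite-dimensional optimization problem over weights on the tuples in `L`. -/
theorem statement1 (n M : ℕ) (hn : 1 ≤ n) (hM : 1 ≤ M)
    (r : Fin (n + 1) → ℝ) (hr0 : r 0 = 0) (hr : StrictMono r)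
    (Sm : Fin M → Finset (Fin (n + 1))) (hSm0 : ∀ m, (0 : Fin (n + 1)) ∈ Sm m)
    (v : Fin M → Fin (n + 1) → ℝ) (η : ℝ) (hη : 0 ≤ η)
    (hU : (Uset Sm v η).Nonempty)
    (S : Finset (Fin (n + 1))) (hS : 0 ∈ S) :
    wcRev Sm v η r S =
      sInf {x : ℝ | ∃ μ : (Fin M → Fin (n + 1)) → ℝ,
        (∀ t, memL Sm t → 0 ≤ μ t) ∧
        (∑ t ∈ Finset.univ.filter (fun t : Fin M → Fin (n + 1) => memL Sm t), μ t) = 1 ∧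
        (∀ m : Fin M, ∀ i ∈ Sm m,
          |(∑ t ∈ Finset.univ.filter
              (fun t : Fin M → Fin (n + 1) => memL Sm t ∧ t m = i), μ t) - v m i| ≤ η) ∧
        x = ∑ t ∈ Finset.univ.filter (fun t : Fin M → Fin (n + 1) => memL Sm t),
              rho Sm r t S * μ t} := by
  classical
  have hSne : S.Nonempty := ⟨0, hS⟩
  have hSmne : ∀ m, (Sm m).Nonempty := fun m => ⟨0, hSm0 m⟩
  have hrnn : ∀ i, 0 ≤ r i := fun i => hr0 ▸ hr.monotone (Fin.zero_le i)
  set A : Set ℝ := {x | ∃ lam ∈ Uset Sm v η, x = expRev r lam S} with hA_def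
  set B : Set ℝ := {x : ℝ | ∃ μ : (Fin M → Fin (n + 1)) → ℝ,
        (∀ t, memL Sm t → 0 ≤ μ t) ∧
        (∑ t ∈ Finset.univ.filter (fun t : Fin M → Fin (n + 1) => memL Sm t), μ t) = 1 ∧
        (∀ m : Fin M, ∀ i ∈ Sm m,
          |(∑ t ∈ Finset.univ.filter
              (fun t : Fin M → Fin (n + 1) => memL Sm t ∧ t m = i), μ t) - v m i| ≤ η) ∧
        x = ∑ t ∈ Finset.univ.filter (fun t : Fin M → Fin (n + 1) => memL Sm t),
              rho Sm r t S * μ t} with hB_def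
  -- rho set facts
  have hfin : ∀ t : Fin M → Fin (n + 1),
      {x | ∃ i ∈ S, (∃ σ : Equiv.Perm (Fin (n + 1)),
        (∀ m : Fin M, isTop σ (Sm m) (t m)) ∧ isTop σ S i) ∧ x = r i}.Finite := by
    intro t
    apply Set.Finite.subset (Set.finite_range r)
    rintro x ⟨i, _, _, rfl⟩
    exact ⟨i, rfl⟩
  have rho_le : ∀ (t : Fin M → Fin (n + 1)) (σ : Equiv.Perm (Fin (n + 1))),
      (∀ m, isTop σ (Sm m) (t m)) → rho Sm r t S ≤ r (topOf σ S) := by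
    intro t σ hσ
    exact csInf_le (hfin t).bddBelow
      ⟨topOf σ S, (topOf_spec σ hSne).1, ⟨σ, hσ, topOf_spec σ hSne⟩, rfl⟩
  have rho_spec : ∀ t : Fin M → Fin (n + 1), ∃ σ : Equiv.Perm (Fin (n + 1)),
      memL Sm t → ((∀ m, isTop σ (Sm m) (t m)) ∧ rho Sm r t S = r (topOf σ S)) := by
    intro t
    by_cases ht : memL Sm t
    · obtain ⟨σ0, hσ0⟩ := ht
      have hne : {x | ∃ i ∈ S, (∃ σ : Equiv.Perm (Fin (n + 1)),
          (∀ m : Fin M, isTop σ (Sm m) (t m)) ∧ isTop σ S i) ∧ x = r i}.Nonempty :=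
        ⟨r (topOf σ0 S), topOf σ0 S, (topOf_spec σ0 hSne).1, ⟨σ0, hσ0, topOf_spec σ0 hSne⟩, rfl⟩
      obtain ⟨i, hiS, ⟨σ, hσ, hitop⟩, hx⟩ := hne.csInf_mem (hfin t)
      refine ⟨σ, fun _ => ⟨hσ, ?_⟩⟩
      have : i = topOf σ S := isTop_unique hitop (topOf_spec σ hSne)
      rw [rho, hx, this]
    · exact ⟨1, fun h => absurd h ht⟩
  choose st hst using rho_spec
  have rho_nn : ∀ t, memL Sm t → 0 ≤ rho Sm r t S := by
    intro t ht
    rw [(hst t ht).2]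
    exact hrnn _
  -- Direction 1: from a choice model, build μ with value ≤
  have dir1 : ∀ a ∈ A, ∃ b ∈ B, b ≤ a := by
    rintro a ⟨lam, ⟨⟨hnn, hsum⟩, hcons⟩, rfl⟩
    set T : Equiv.Perm (Fin (n + 1)) → (Fin M → Fin (n + 1)) :=
      fun σ m => topOf σ (Sm m) with hT_def
    have hTL : ∀ σ, memL Sm (T σ) := fun σ => ⟨σ, fun m => topOf_spec σ (hSmne m)⟩
    set μ : (Fin M → Fin (n + 1)) → ℝ :=
      fun t => ∑ σ : Equiv.Perm (Fin (n + 1)), if T σ = t then lam σ else 0 with hμ_def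
    have key : ∀ (f : (Fin M → Fin (n + 1)) → ℝ) (p : (Fin M → Fin (n + 1)) → Prop)
        [DecidablePred p],
        ∑ t ∈ Finset.univ.filter p, f t * μ t =
          ∑ σ : Equiv.Perm (Fin (n + 1)), if p (T σ) then f (T σ) * lam σ else 0 := by
      intro f p _
      simp_rw [hμ_def, Finset.mul_sum, mul_ite, mul_zero]
      rw [Finset.sum_comm]
      refine Finset.sum_congr rfl fun σ _ => ?_
      rw [Finset.sum_ite_eq]
      simp [Finset.mem_filter]
    have key1 : ∀ (p : (Fin M → Fin (n + 1)) → Prop) [DecidablePred p],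
        ∑ t ∈ Finset.univ.filter p, μ t =
          ∑ σ : Equiv.Perm (Fin (n + 1)), if p (T σ) then lam σ else 0 := by
      intro p _
      have := key (fun _ => 1) p
      simpa using this
    have hμnn : ∀ t, memL Sm t → 0 ≤ μ t := by
      intro t _
      refine Finset.sum_nonneg fun σ _ => ?_
      by_cases h : T σ = t
      · rw [if_pos h]; exact hnn σ
      · rw [if_neg h]
    refine ⟨∑ t ∈ Finset.univ.filter (fun t : Fin M → Fin (n + 1) => memL Sm t),
      rho Sm r t S * μ t, ⟨μ, hμnn, ?_, ?_, rfl⟩, ?_⟩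
    · rw [key1]
      simp only [hTL, if_true]
      exact hsum
    · intro m i hi
      have hmarg : (∑ t ∈ Finset.univ.filter
          (fun t : Fin M → Fin (n + 1) => memL Sm t ∧ t m = i), μ t) =
          choiceProb lam (Sm m) i := by
        rw [key1, choiceProb_eq lam (hSmne m) i]
        refine Finset.sum_congr rfl fun σ _ => ?_
        exact if_congr ⟨fun h => h.2, fun h => ⟨hTL σ, h⟩⟩ rfl rfl
      rw [hmarg]
      exact hcons m i hi
    · rw [key, expRev_eq r lam hSne]
      refine Finset.sum_le_sum fun σ _ => ?_
      rw [if_pos (hTL σ)]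
      exact mul_le_mul_of_nonneg_right (rho_le (T σ) σ fun m => topOf_spec σ (hSmne m)) (hnn σ)
  -- Direction 2: from μ, build a choice model with equal value
  have dir2 : ∀ b ∈ B, ∃ a ∈ A, a ≤ b := by
    rintro b ⟨μ, hμnn, hμsum, hμcons, rfl⟩
    set Lfin := Finset.univ.filter (fun t : Fin M → Fin (n + 1) => memL Sm t) with hLfin
    have hmemLfin : ∀ t ∈ Lfin, memL Sm t := by
      intro t ht; exact (Finset.mem_filter.1 ht).2
    set lam : Equiv.Perm (Fin (n + 1)) → ℝ :=
      fun σ => ∑ t ∈ Lfin, if st t = σ then μ t else 0 with hlam_def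
    have key2 : ∀ f : Equiv.Perm (Fin (n + 1)) → ℝ,
        ∑ σ : Equiv.Perm (Fin (n + 1)), f σ * lam σ = ∑ t ∈ Lfin, f (st t) * μ t := by
      intro f
      simp_rw [hlam_def, Finset.mul_sum, mul_ite, mul_zero]
      rw [Finset.sum_comm]
      refine Finset.sum_congr rfl fun t _ => ?_
      rw [Finset.sum_ite_eq]
      simp
    have hlamnn : ∀ σ, 0 ≤ lam σ := by
      intro σ
      refine Finset.sum_nonneg fun t ht => ?_
      have := hμnn t (hmemLfin t ht)
      positivity
    have hlamsum : ∑ σ : Equiv.Perm (Fin (n + 1)), lam σ = 1 := by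
      have := key2 (fun _ => 1)
      simpa [hμsum] using this
    have hcp : ∀ m i, choiceProb lam (Sm m) i =
        ∑ t ∈ Finset.univ.filter (fun t : Fin M → Fin (n + 1) => memL Sm t ∧ t m = i), μ t := by
      intro m i
      have htransfer : ∀ t ∈ Lfin, topOf (st t) (Sm m) = t m := fun t ht =>
        isTop_unique (topOf_spec (st t) (hSmne m)) ((hst t (hmemLfin t ht)).1 m)
      calc choiceProb lam (Sm m) i
          = ∑ σ : Equiv.Perm (Fin (n + 1)),
              (fun τ : Equiv.Perm (Fin (n + 1)) =>
                if topOf τ (Sm m) = i then (1 : ℝ) else 0) σ * lam σ := by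
            rw [choiceProb_eq lam (hSmne m) i]
            refine Finset.sum_congr rfl fun σ _ => ?_
            by_cases h : topOf σ (Sm m) = i
            · simp only [if_pos h, one_mul]
            · simp only [if_neg h, zero_mul]
        _ = ∑ t ∈ Lfin, (fun τ : Equiv.Perm (Fin (n + 1)) =>
              if topOf τ (Sm m) = i then (1 : ℝ) else 0) (st t) * μ t :=
            key2 _
        _ = ∑ t ∈ Lfin, if t m = i then μ t else 0 := by
            refine Finset.sum_congr rfl fun t ht => ?_
            simp only [htransfer t ht]
            by_cases h : t m = i
            · simp only [if_pos h, one_mul]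
            · simp only [if_neg h, zero_mul]
        _ = ∑ t ∈ Lfin.filter (fun t => t m = i), μ t := (Finset.sum_filter _ _).symm
        _ = ∑ t ∈ Finset.univ.filter
              (fun t : Fin M → Fin (n + 1) => memL Sm t ∧ t m = i), μ t := by
            rw [hLfin, Finset.filter_filter]
    refine ⟨expRev r lam S, ⟨lam, ⟨⟨hlamnn, hlamsum⟩, ?_⟩, rfl⟩, ?_⟩
    · intro m i hi
      rw [hcp m i]
      exact hμcons m i hi
    · rw [expRev_eq r lam hSne, key2]
      refine le_of_eq (Finset.sum_congr rfl fun t ht => ?_)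
      rw [(hst t (hmemLfin t ht)).2]
  -- combine
  obtain ⟨lam0, hlam0⟩ := hU
  have hAne : A.Nonempty := ⟨expRev r lam0 S, lam0, hlam0, rfl⟩
  obtain ⟨b0, hb0, _⟩ := dir1 _ hAne.some_mem
  have hBne : B.Nonempty := ⟨b0, hb0⟩
  have hAbdd : BddBelow A := by
    refine ⟨0, ?_⟩
    rintro a ⟨lam, ⟨⟨hnn, _⟩, _⟩, rfl⟩
    rw [expRev_eq r lam hSne]
    exact Finset.sum_nonneg fun σ _ => mul_nonneg (hrnn _) (hnn σ)
  have hBbdd : BddBelow B := by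
    refine ⟨0, ?_⟩
    rintro b ⟨μ, hμnn, _, _, rfl⟩
    refine Finset.sum_nonneg fun t ht => ?_
    have htL := (Finset.mem_filter.1 ht).2
    exact mul_nonneg (rho_nn t htL) (hμnn t htL)
  show sInf A = sInf B
  apply le_antisymm
  · refine le_csInf hBne fun b hb => ?_
    obtain ⟨a, ha, hab⟩ := dir2 b hb
    exact (csInf_le hAbdd ha).trans hab
  · refine le_csInf hAne fun a ha => ?_
    obtain ⟨b, hb, hba⟩ := dir1 a ha
    exact (csInf_le hBbdd hb).trans hba


end RobustAssortment
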